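/- Let λ > 0 and let μ be a probability measure on ℝ with μ([0,∞)) = 1, ρ = λ m₁ < 1, and m₂ < ∞. Then the function s ↦ (s φ(s) − s² φ′(s)) / φ(s)³, defined for s > 0, converges as s → 0⁺ to −φ″(0) / (2 φ′(0)³) = −i λ m₂ / (2 (1 − ρ)³), where φ″(0) = λ ∫ (i x)² dμ(x) = −λ m₂. -/

import Mathlib

open MeasureTheory

/-- The characteristic function of a measure `μ` on `ℝ`. -/
noncomputable def charFn (μ : Measure ℝ) (s : ℝ) : ℂ :=
  ∫ x, Complex.exp (Complex.I * s * x) ∂μ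

/-- The characteristic exponent `φ(s) = λ(γ(s) − 1) − i s` of the net input process. -/
noncomputable def phi (lam : ℝ) (μ : Measure ℝ) (s : ℝ) : ℂ :=
  lam * (charFn μ s - 1) - Complex.I * s

/-- The derivative of the characteristic exponent: `φ′(s) = λ ∫ i x exp(i s x) dμ(x) − i`. -/
noncomputable def phiDeriv (lam : ℝ) (μ : Measure ℝ) (s : ℝ) : ℂ :=
  lam * ∫ x, Complex.I * x * Complex.exp (Complex.I * s * x) ∂μ - Complex.I

/-- The `k`-th moment of a measure on `ℝ`. -/
noncomputable def moment (μ : Measure ℝ) (k : ℕ) : ℝ :=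
  ∫ x, x ^ k ∂μ

open Filter


lemma norm_expI (θ : ℝ) : ‖Complex.exp (Complex.I * θ)‖ = 1 := by
  rw [show Complex.I * (θ:ℂ) = (θ:ℂ) * Complex.I by ring, Complex.norm_exp_ofReal_mul_I]

lemma hasDerivAt_expI (t : ℝ) :
    HasDerivAt (fun t : ℝ => Complex.exp (Complex.I * t))
      (Complex.I * Complex.exp (Complex.I * t)) t := by
  have h0 : HasDerivAt (fun t : ℝ => (t : ℂ)) 1 t := by
    simpa using (hasDerivAt_id t).ofReal_comp
  have := (h0.const_mul Complex.I).cexp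
  simpa [mul_comm] using this

lemma mvt_aux {f f' : ℝ → ℂ} {C : ℝ} (θ : ℝ)
    (hd : ∀ t, HasDerivAt f (f' t) t)
    (hb : ∀ t ∈ Set.uIcc 0 θ, ‖f' t‖ ≤ C) : ‖f θ - f 0‖ ≤ C * |θ| := by
  have := Convex.norm_image_sub_le_of_norm_hasDerivWithin_le
    (f := f) (f' := f') (s := Set.uIcc 0 θ) (C := C)
    (fun t ht => (hd t).hasDerivWithinAt) hb (convex_uIcc 0 θ)
    Set.left_mem_uIcc Set.right_mem_uIcc
  simpa using this

lemma abs_le_abs_of_uIcc {t θ : ℝ} (ht : t ∈ Set.uIcc 0 θ) : |t| ≤ |θ| := by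
  rcases Set.mem_uIcc.1 ht with ⟨h1, h2⟩ | ⟨h1, h2⟩
  · rw [_root_.abs_of_nonneg h1]; exact h2.trans (le_abs_self θ)
  · rw [_root_.abs_of_nonpos h2]; have := neg_abs_le θ; linarith

lemma L1 (θ : ℝ) : ‖Complex.exp (Complex.I * θ) - 1‖ ≤ |θ| := by
  have := mvt_aux (f := fun t : ℝ => Complex.exp (Complex.I * t))
    (f' := fun t : ℝ => Complex.I * Complex.exp (Complex.I * t)) (C := 1) θ
    hasDerivAt_expI (fun t _ => by
      rw [norm_mul, Complex.norm_I, one_mul, norm_expI])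
  simpa using this

lemma L2 (θ : ℝ) : ‖Complex.exp (Complex.I * θ) - 1 - Complex.I * θ‖ ≤ θ ^ 2 := by
  have hd : ∀ t : ℝ, HasDerivAt
      (fun t : ℝ => Complex.exp (Complex.I * t) - 1 - Complex.I * t)
      (Complex.I * (Complex.exp (Complex.I * t) - 1)) t := by
    intro t
    have h0 : HasDerivAt (fun t : ℝ => (t : ℂ)) 1 t := by
      simpa using (hasDerivAt_id t).ofReal_comp
    have := ((hasDerivAt_expI t).sub_const 1).sub (h0.const_mul Complex.I)
    convert this using 1
    · rfl
    · rfl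
    · ring
  have hb : ∀ t ∈ Set.uIcc 0 θ,
      ‖Complex.I * (Complex.exp (Complex.I * t) - 1)‖ ≤ |θ| := by
    intro t ht
    rw [norm_mul, Complex.norm_I, one_mul]
    exact (L1 t).trans (abs_le_abs_of_uIcc ht)
  have := mvt_aux θ hd hb
  have h2 : |θ| * |θ| = θ ^ 2 := by rw [← _root_.sq_abs θ]; ring
  calc ‖Complex.exp (Complex.I * θ) - 1 - Complex.I * θ‖ ≤ |θ| * |θ| := by simpa using this
  _ = θ ^ 2 := h2

lemma L3 (θ : ℝ) :
    ‖Complex.exp (Complex.I * θ) - 1 - Complex.I * θ + (θ:ℂ) ^ 2 / 2‖ ≤ |θ| ^ 3 := by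
  have hd : ∀ t : ℝ, HasDerivAt
      (fun t : ℝ => Complex.exp (Complex.I * t) - 1 - Complex.I * t + (t:ℂ) ^ 2 / 2)
      (Complex.I * (Complex.exp (Complex.I * t) - 1 - Complex.I * t)) t := by
    intro t
    have h0 : HasDerivAt (fun t : ℝ => (t : ℂ)) 1 t := by
      simpa using (hasDerivAt_id t).ofReal_comp
    have hsq : HasDerivAt (fun t : ℝ => (t:ℂ) ^ 2 / 2) ((t:ℂ)) t := by
      have := (h0.mul h0).div_const 2
      have e : (1 * (t:ℂ) + (t:ℂ) * 1) / 2 = (t:ℂ) := by ring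
      rw [e] at this
      convert this using 2 with u
      · rfl
      · simp only [Pi.mul_apply]; ring
    have := (((hasDerivAt_expI t).sub_const 1).sub (h0.const_mul Complex.I)).add hsq
    convert this using 1
    · rfl
    · rfl
    have hI : Complex.I * Complex.I = -1 := Complex.I_mul_I
    ring_nf
    rw [Complex.I_sq]
    ring
  have hb : ∀ t ∈ Set.uIcc 0 θ,
      ‖Complex.I * (Complex.exp (Complex.I * t) - 1 - Complex.I * t)‖ ≤ θ ^ 2 := by
    intro t ht
    rw [norm_mul, Complex.norm_I, one_mul]
    refine (L2 t).trans ?_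
    have h := abs_le_abs_of_uIcc ht
    calc t ^ 2 = |t| ^ 2 := (_root_.sq_abs t).symm
    _ ≤ |θ| ^ 2 := by exact pow_le_pow_left₀ (abs_nonneg t) h 2
    _ = θ ^ 2 := _root_.sq_abs θ
  have := mvt_aux θ hd hb
  calc ‖Complex.exp (Complex.I * θ) - 1 - Complex.I * θ + (θ:ℂ) ^ 2 / 2‖
      ≤ θ ^ 2 * |θ| := by simpa using this
  _ = |θ| ^ 3 := by rw [← _root_.sq_abs θ]; ring

lemma contExpI (s : ℝ) : Continuous (fun x : ℝ => Complex.exp (Complex.I * s * x)) := by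
  fun_prop

lemma integrable_expI (μ : Measure ℝ) [IsProbabilityMeasure μ] (s : ℝ) :
    Integrable (fun x : ℝ => Complex.exp (Complex.I * s * x)) μ := by
  refine (integrable_const (1:ℝ)).mono' (contExpI s).aestronglyMeasurable ?_
  filter_upwards with x
  have e : Complex.I * (s:ℂ) * (x:ℂ) = Complex.I * ((s*x : ℝ) : ℂ) := by push_cast; ring
  rw [e, norm_expI]

lemma integrable_ofReal {μ : Measure ℝ} {f : ℝ → ℝ} (hf : Integrable f μ) :
    Integrable (fun x => (f x : ℂ)) μ := by
  exact hf.ofReal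

lemma tendstoA (μ : Measure ℝ) [IsProbabilityMeasure μ]
    (h1 : Integrable (fun x : ℝ => x) μ) (h2 : Integrable (fun x : ℝ => x ^ 2) μ) :
    Tendsto (fun s : ℝ =>
        (charFn μ s - 1 - Complex.I * s * (moment μ 1) + (s:ℂ)^2 * (moment μ 2) / 2)
          / (s:ℂ)^2)
      (nhdsWithin 0 (Set.Ioi 0)) (nhds 0) := by
  have hxC : Integrable (fun x : ℝ => (x:ℂ)) μ := h1.ofReal
  have hx2C : Integrable (fun x : ℝ => (x:ℂ)^2) μ := by
    have := h2.ofReal (𝕜 := ℂ)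
    simpa using this
  set g : ℝ → ℝ → ℂ := fun s x =>
    (Complex.exp (Complex.I * s * x) - 1 - Complex.I * s * x + (s:ℂ)^2 * (x:ℂ)^2 / 2)
      / (s:ℂ)^2 with hg
  have enum : ∀ s x : ℝ,
      Complex.exp (Complex.I * s * x) - 1 - Complex.I * s * x + (s:ℂ)^2 * (x:ℂ)^2 / 2
        = Complex.exp (Complex.I * ((s*x : ℝ):ℂ)) - 1 - Complex.I * ((s*x : ℝ):ℂ)
          + (((s*x : ℝ)):ℂ)^2 / 2 := by
    intro s x; push_cast; ring
  -- the integral identity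
  have hint : ∀ s : ℝ, ∫ x, g s x ∂μ =
      (charFn μ s - 1 - Complex.I * s * (moment μ 1) + (s:ℂ)^2 * (moment μ 2) / 2)
        / (s:ℂ)^2 := by
    intro s
    have i1 := integrable_expI μ s
    have i2 : Integrable (fun x : ℝ => Complex.exp (Complex.I * s * x) - 1) μ := by
      exact i1.sub (integrable_const 1)
    have i3 : Integrable (fun x : ℝ => Complex.I * (s:ℂ) * (x:ℂ)) μ :=
      hxC.const_mul (Complex.I * s)
    have i4 : Integrable (fun x : ℝ => (s:ℂ)^2 * (x:ℂ)^2 / 2) μ :=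
      (hx2C.const_mul ((s:ℂ)^2)).div_const 2
    have hm1 : ∫ x : ℝ, (x:ℂ) ∂μ = ((moment μ 1 : ℝ) : ℂ) := by
      have : ∫ x : ℝ, ((x : ℝ) : ℂ) ∂μ = ((∫ x : ℝ, x ∂μ : ℝ) : ℂ) :=
        integral_ofReal (f := fun x : ℝ => x)
      rw [this]
      norm_cast
      simp [moment]
    have hm2 : ∫ x : ℝ, (x:ℂ)^2 ∂μ = ((moment μ 2 : ℝ) : ℂ) := by
      have e : ∫ x : ℝ, ((x^2 : ℝ) : ℂ) ∂μ = ((∫ x : ℝ, x^2 ∂μ : ℝ) : ℂ) :=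
        integral_ofReal (f := fun x : ℝ => x^2)
      rw [show (fun x : ℝ => (x:ℂ)^2) = (fun x : ℝ => ((x^2 : ℝ) : ℂ)) from
        funext fun x => by push_cast; ring, e]
      norm_cast
    calc ∫ x, g s x ∂μ
        = (∫ x, (Complex.exp (Complex.I * s * x) - 1 - Complex.I * s * x
            + (s:ℂ)^2 * (x:ℂ)^2 / 2) ∂μ) / (s:ℂ)^2 := by
          simp_rw [hg, integral_div]
      _ = _ := by
          have i23 : Integrable
              (fun x : ℝ => Complex.exp (Complex.I * s * x) - 1 - Complex.I * s * x) μ := by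
            exact i2.sub i3
          rw [integral_add i23 i4, integral_sub i2 i3, integral_sub i1
            (integrable_const 1), integral_div, integral_const_mul, integral_const_mul,
            hm1, hm2]
          simp only [integral_const, measure_univ, probReal_univ, one_smul, charFn]
  have hmeas : ∀ᶠ s in nhdsWithin (0:ℝ) (Set.Ioi 0), AEStronglyMeasurable (g s) μ := by
    filter_upwards with s
    have : Continuous (g s) := by
      apply Continuous.div_const
      fun_prop
    exact this.aestronglyMeasurable
  have hbound : ∀ᶠ s in nhdsWithin (0:ℝ) (Set.Ioi 0),
      ∀ᵐ x ∂μ, ‖g s x‖ ≤ 3/2 * x^2 := by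
    filter_upwards [self_mem_nhdsWithin] with s hs
    filter_upwards with x
    have hs' : (0:ℝ) < s := hs
    rw [hg]
    simp only
    rw [norm_div, enum s x]
    have hnum : ‖Complex.exp (Complex.I * ((s*x : ℝ):ℂ)) - 1 - Complex.I * ((s*x : ℝ):ℂ)
        + (((s*x : ℝ)):ℂ)^2 / 2‖ ≤ (3/2) * (s*x)^2 := by
      have := norm_add_le (Complex.exp (Complex.I * ((s*x : ℝ):ℂ)) - 1
        - Complex.I * ((s*x : ℝ):ℂ)) ((((s*x : ℝ)):ℂ)^2 / 2)
      refine this.trans ?_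
      have h2' : ‖(((s*x : ℝ)):ℂ)^2 / 2‖ = (s*x)^2 / 2 := by
        rw [norm_div, norm_pow, Complex.norm_real, Real.norm_eq_abs, _root_.sq_abs]
        norm_num
      have := L2 (s*x)
      rw [h2'] at *
      nlinarith [L2 (s*x)]
    have hden : ‖((s:ℂ))^2‖ = s^2 := by
      rw [show ((s:ℂ))^2 = (((s^2 : ℝ)):ℂ) by push_cast; ring, Complex.norm_real]
      exact abs_of_nonneg (sq_nonneg s)
    rw [hden]
    rw [div_le_iff₀ (by positivity)]
    calc ‖_‖ ≤ (3/2) * (s*x)^2 := hnum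
    _ = 3/2 * x^2 * s^2 := by ring
  have hlim : ∀ᵐ x ∂μ, Tendsto (fun s => g s x) (nhdsWithin (0:ℝ) (Set.Ioi 0)) (nhds 0) := by
    filter_upwards with x
    apply squeeze_zero_norm' (a := fun s : ℝ => |x|^3 * s)
    · filter_upwards [self_mem_nhdsWithin] with s hs
      have hs' : (0:ℝ) < s := hs
      rw [hg]
      simp only
      rw [norm_div, enum s x]
      have hden : ‖((s:ℂ))^2‖ = s^2 := by
        rw [show ((s:ℂ))^2 = (((s^2 : ℝ)):ℂ) by push_cast; ring, Complex.norm_real]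
        exact abs_of_nonneg (sq_nonneg s)
      rw [hden, div_le_iff₀ (by positivity)]
      calc ‖_‖ ≤ |s*x|^3 := L3 (s*x)
      _ = |s|^3 * |x|^3 := by rw [abs_mul]; ring
      _ = s^3 * |x|^3 := by rw [abs_of_pos hs']
      _ = |x|^3 * s * s^2 := by ring
    · have : Tendsto (fun s : ℝ => |x|^3 * s) (nhds 0) (nhds (|x|^3 * 0)) :=
        (tendsto_id.const_mul _)
      simpa using this.mono_left nhdsWithin_le_nhds
  have := tendsto_integral_filter_of_dominated_convergence (μ := μ)
    (F := g) (f := fun _ => 0) (bound := fun x => 3/2 * x^2)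
    hmeas hbound (h2.const_mul (3/2)) hlim
  simp only [integral_zero] at this
  exact this.congr (fun s => hint s)

lemma L1' (θ : ℝ) : ‖Complex.exp (Complex.I * θ) - 1 - Complex.I * θ‖ ≤ 2 * |θ| := by
  have h := norm_sub_le (Complex.exp (Complex.I * θ) - 1) (Complex.I * θ)
  have h2 : ‖Complex.I * (θ:ℂ)‖ = |θ| := by
    rw [norm_mul, Complex.norm_I, one_mul, Complex.norm_real, Real.norm_eq_abs]
  refine h.trans ?_
  rw [h2]
  have := L1 θ
  linarith

lemma tendstoB (μ : Measure ℝ) [IsProbabilityMeasure μ]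
    (h1 : Integrable (fun x : ℝ => x) μ) (h2 : Integrable (fun x : ℝ => x ^ 2) μ) :
    Tendsto (fun s : ℝ =>
        ((∫ x, Complex.I * x * Complex.exp (Complex.I * s * x) ∂μ)
          - Complex.I * (moment μ 1) + (s:ℂ) * (moment μ 2)) / (s:ℂ))
      (nhdsWithin 0 (Set.Ioi 0)) (nhds 0) := by
  have hxC : Integrable (fun x : ℝ => (x:ℂ)) μ := h1.ofReal
  have hx2C : Integrable (fun x : ℝ => (x:ℂ)^2) μ := by
    have := h2.ofReal (𝕜 := ℂ)
    simpa using this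
  set g : ℝ → ℝ → ℂ := fun s x =>
    (Complex.I * x * Complex.exp (Complex.I * s * x) - Complex.I * x + (s:ℂ) * (x:ℂ)^2)
      / (s:ℂ) with hg
  have enum : ∀ s x : ℝ,
      Complex.I * x * Complex.exp (Complex.I * s * x) - Complex.I * x + (s:ℂ) * (x:ℂ)^2
        = Complex.I * x * (Complex.exp (Complex.I * ((s*x:ℝ):ℂ)) - 1
            - Complex.I * ((s*x:ℝ):ℂ)) := by
    intro s x
    push_cast
    rw [show Complex.I * (s:ℂ) * (x:ℂ) = Complex.I * ((s:ℂ) * (x:ℂ)) from mul_assoc _ _ _]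
    linear_combination ((s:ℂ) * (x:ℂ)^2) * Complex.I_mul_I
  have hnormIx : ∀ x : ℝ, ‖Complex.I * (x:ℂ)‖ = |x| := fun x => by
    rw [norm_mul, Complex.norm_I, one_mul, Complex.norm_real, Real.norm_eq_abs]
  have hint : ∀ s : ℝ, ∫ x, g s x ∂μ =
      ((∫ x, Complex.I * x * Complex.exp (Complex.I * s * x) ∂μ)
        - Complex.I * (moment μ 1) + (s:ℂ) * (moment μ 2)) / (s:ℂ) := by
    intro s
    have iA : Integrable (fun x : ℝ => Complex.I * x * Complex.exp (Complex.I * s * x)) μ := by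
      refine h1.abs.mono' (Continuous.aestronglyMeasurable (by fun_prop)) ?_
      filter_upwards with x
      have e : Complex.I * (s:ℂ) * (x:ℂ) = Complex.I * ((s*x : ℝ) : ℂ) := by push_cast; ring
      rw [norm_mul, e, norm_expI, mul_one, hnormIx]
    have iB : Integrable (fun x : ℝ => Complex.I * (x:ℂ)) μ := hxC.const_mul Complex.I
    have iC : Integrable (fun x : ℝ => (s:ℂ) * (x:ℂ)^2) μ := hx2C.const_mul s
    have iAB : Integrable
        (fun x : ℝ => Complex.I * x * Complex.exp (Complex.I * s * x) - Complex.I * x) μ := by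
      exact iA.sub iB
    have hm1 : ∫ x : ℝ, (x:ℂ) ∂μ = ((moment μ 1 : ℝ) : ℂ) := by
      have : ∫ x : ℝ, ((x : ℝ) : ℂ) ∂μ = ((∫ x : ℝ, x ∂μ : ℝ) : ℂ) :=
        integral_ofReal (f := fun x : ℝ => x)
      rw [this]; norm_cast; simp [moment]
    have hm2 : ∫ x : ℝ, (x:ℂ)^2 ∂μ = ((moment μ 2 : ℝ) : ℂ) := by
      have e : ∫ x : ℝ, ((x^2 : ℝ) : ℂ) ∂μ = ((∫ x : ℝ, x^2 ∂μ : ℝ) : ℂ) :=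
        integral_ofReal (f := fun x : ℝ => x^2)
      rw [show (fun x : ℝ => (x:ℂ)^2) = (fun x : ℝ => ((x^2 : ℝ) : ℂ)) from
        funext fun x => by push_cast; ring, e]
      norm_cast
    rw [hg]
    simp only
    rw [integral_div, integral_add iAB iC, integral_sub iA iB, integral_const_mul,
      integral_const_mul, hm1, hm2]
  have hmeas : ∀ᶠ s in nhdsWithin (0:ℝ) (Set.Ioi 0), AEStronglyMeasurable (g s) μ := by
    filter_upwards with s
    have : Continuous (g s) := by
      apply Continuous.div_const
      fun_prop
    exact this.aestronglyMeasurable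
  have hbound : ∀ᶠ s in nhdsWithin (0:ℝ) (Set.Ioi 0),
      ∀ᵐ x ∂μ, ‖g s x‖ ≤ 2 * x^2 := by
    filter_upwards [self_mem_nhdsWithin] with s hs
    filter_upwards with x
    have hs' : (0:ℝ) < s := hs
    rw [hg]
    simp only
    rw [norm_div, enum s x, norm_mul, hnormIx, Complex.norm_real, Real.norm_eq_abs,
      abs_of_pos hs', div_le_iff₀ hs']
    calc |x| * ‖Complex.exp (Complex.I * ((s*x:ℝ):ℂ)) - 1 - Complex.I * ((s*x:ℝ):ℂ)‖
        ≤ |x| * (2 * |s*x|) := by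
          exact mul_le_mul_of_nonneg_left (L1' (s*x)) (abs_nonneg x)
      _ = |x| * (2 * (s * |x|)) := by rw [abs_mul, abs_of_pos hs']
      _ = 2 * (|x| * |x|) * s := by ring
      _ = 2 * x^2 * s := by rw [← _root_.sq_abs x]; ring
  have hlim : ∀ᵐ x ∂μ, Tendsto (fun s => g s x) (nhdsWithin (0:ℝ) (Set.Ioi 0)) (nhds 0) := by
    filter_upwards with x
    apply squeeze_zero_norm' (a := fun s : ℝ => |x|^3 * s)
    · filter_upwards [self_mem_nhdsWithin] with s hs
      have hs' : (0:ℝ) < s := hs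
      rw [hg]
      simp only
      rw [norm_div, enum s x, norm_mul, hnormIx, Complex.norm_real, Real.norm_eq_abs,
        abs_of_pos hs', div_le_iff₀ hs']
      calc |x| * ‖Complex.exp (Complex.I * ((s*x:ℝ):ℂ)) - 1 - Complex.I * ((s*x:ℝ):ℂ)‖
          ≤ |x| * (s*x)^2 := mul_le_mul_of_nonneg_left (L2 (s*x)) (abs_nonneg x)
        _ = |x| * (s^2 * x^2) := by ring
        _ = |x| * |x|^2 * s * s := by rw [← _root_.sq_abs x]; ring
        _ = |x|^3 * s * s := by ring
    · have : Tendsto (fun s : ℝ => |x|^3 * s) (nhds 0) (nhds (|x|^3 * 0)) :=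
        tendsto_id.const_mul _
      simpa using this.mono_left nhdsWithin_le_nhds
  have := tendsto_integral_filter_of_dominated_convergence (μ := μ)
    (F := g) (f := fun _ => 0) (bound := fun x => 2 * x^2)
    hmeas hbound (h2.const_mul 2) hlim
  simp only [integral_zero] at this
  exact this.congr (fun s => hint s)


/-- If `ρ = λ m₁ < 1` and `m₂ < ∞`, then `(s φ(s) − s² φ′(s)) / φ(s)³ → −i λ m₂ / (2 (1 − ρ)³)`
as `s → 0⁺`. -/
theorem tendsto_s_phi_ratio (lam : ℝ) (hlam : 0 < lam) (μ : Measure ℝ)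
    [IsProbabilityMeasure μ] (hsupp : μ (Set.Ici 0) = 1)
    (h1 : Integrable (fun x => x) μ) (h2 : Integrable (fun x => x ^ 2) μ)
    (hρ : lam * moment μ 1 < 1) :
    Filter.Tendsto
      (fun s : ℝ =>
        ((s : ℂ) * phi lam μ s - (s : ℂ) ^ 2 * phiDeriv lam μ s) / (phi lam μ s) ^ 3)
      (nhdsWithin 0 (Set.Ioi 0))
      (nhds (-Complex.I * lam * moment μ 2 / (2 * ((1 : ℂ) - lam * moment μ 1) ^ 3))) := by
  have hA := tendstoA μ h1 h2
  have hB := tendstoB μ h1 h2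
  set m1 : ℝ := moment μ 1
  set m2 : ℝ := moment μ 2
  set aF : ℝ → ℂ := fun s =>
    (charFn μ s - 1 - Complex.I * s * (m1:ℝ) + (s:ℂ)^2 * (m2:ℝ) / 2) / (s:ℂ)^2 with haF
  set bF : ℝ → ℂ := fun s =>
    ((∫ x, Complex.I * x * Complex.exp (Complex.I * s * x) ∂μ)
      - Complex.I * (m1:ℝ) + (s:ℂ) * (m2:ℝ)) / (s:ℂ) with hbF
  set c : ℂ := -Complex.I * (1 - (lam:ℂ) * m1) with hc
  set d : ℝ → ℂ := fun s => -((lam:ℂ) * m2) / 2 + lam * aF s with hd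
  set e : ℝ → ℂ := fun s => (lam:ℂ) * m2 / 2 + lam * (aF s - bF s) with he
  have hw : ((1:ℂ) - (lam:ℂ) * m1) ≠ 0 := by
    rw [show (1:ℂ) - (lam:ℂ) * m1 = ((1 - lam * m1 : ℝ) : ℂ) by push_cast; ring]
    exact_mod_cast Complex.ofReal_ne_zero.2 (ne_of_gt (by linarith))
  have hc3 : c ^ 3 = Complex.I * ((1:ℂ) - (lam:ℂ) * m1) ^ 3 := by
    rw [hc]
    have hI3 : Complex.I ^ 3 = -Complex.I := by
      rw [pow_succ, Complex.I_sq]; ring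
    rw [show (-Complex.I * (1 - (lam:ℂ) * m1)) ^ 3
      = -(Complex.I ^ 3) * (1 - (lam:ℂ) * m1) ^ 3 by ring, hI3]
    ring
  have hc3ne : c ^ 3 ≠ 0 := by
    rw [hc3]
    exact mul_ne_zero Complex.I_ne_zero (pow_ne_zero 3 hw)
  -- the simplified ratio tends to the limit
  have hsC : Filter.Tendsto (fun s : ℝ => (s:ℂ)) (nhdsWithin 0 (Set.Ioi 0)) (nhds 0) := by
    have := Complex.continuous_ofReal.tendsto 0
    simpa using this.mono_left nhdsWithin_le_nhds
  have hdlim : Filter.Tendsto d (nhdsWithin 0 (Set.Ioi 0))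
      (nhds (-((lam:ℂ) * m2) / 2)) := by
    have := (hA.const_mul (lam:ℂ)).const_add (-((lam:ℂ) * m2) / 2)
    simpa using this
  have helim : Filter.Tendsto e (nhdsWithin 0 (Set.Ioi 0)) (nhds ((lam:ℂ) * m2 / 2)) := by
    have := ((hA.sub hB).const_mul (lam:ℂ)).const_add ((lam:ℂ) * m2 / 2)
    simpa using this
  have hden : Filter.Tendsto (fun s : ℝ => (c + (s:ℂ) * d s) ^ 3)
      (nhdsWithin 0 (Set.Ioi 0)) (nhds (c ^ 3)) := by
    have h0 : Filter.Tendsto (fun s : ℝ => c + (s:ℂ) * d s)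
        (nhdsWithin 0 (Set.Ioi 0)) (nhds c) := by
      have := (hsC.mul hdlim).const_add c
      simpa using this
    exact h0.pow 3
  have hratio : Filter.Tendsto (fun s : ℝ => e s / (c + (s:ℂ) * d s) ^ 3)
      (nhdsWithin 0 (Set.Ioi 0)) (nhds ((lam:ℂ) * m2 / 2 / c ^ 3)) :=
    helim.div hden hc3ne
  -- identify the limit value
  have hval : (lam:ℂ) * m2 / 2 / c ^ 3
      = -Complex.I * lam * m2 / (2 * ((1:ℂ) - (lam:ℂ) * m1) ^ 3) := by
    rw [hc3]
    rw [div_eq_div_iff (mul_ne_zero Complex.I_ne_zero (pow_ne_zero 3 hw))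
      (by exact mul_ne_zero two_ne_zero (pow_ne_zero 3 hw))]
    linear_combination ((lam:ℂ) * m2 * ((1:ℂ) - (lam:ℂ) * m1) ^ 3) * Complex.I_mul_I
  rw [← hval]
  -- eventual equality of the two functions
  refine hratio.congr' ?_
  filter_upwards [self_mem_nhdsWithin] with s hs
  have hs' : (0:ℝ) < s := hs
  have hsne : (s:ℂ) ≠ 0 := by exact_mod_cast ne_of_gt hs'
  have hchar : charFn μ s = 1 + Complex.I * s * (m1:ℝ) - (s:ℂ)^2 * (m2:ℝ) / 2
      + (s:ℂ)^2 * aF s := by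
    rw [haF]
    field_simp
    ring
  have hD : (∫ x, Complex.I * x * Complex.exp (Complex.I * s * x) ∂μ)
      = Complex.I * (m1:ℝ) - (s:ℂ) * (m2:ℝ) + (s:ℂ) * bF s := by
    rw [hbF]
    simp only
    rw [mul_div_assoc', mul_div_cancel_left₀ _ hsne]
    ring
  have hphi : phi lam μ s = (s:ℂ) * c + (s:ℂ)^2 * d s := by
    rw [phi, hchar, hc, hd]
    ring
  have hphiD : phiDeriv lam μ s = c + (s:ℂ) * (-((lam:ℂ) * m2) + lam * bF s) := by
    rw [phiDeriv, hD, hc]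
    ring
  have hnum : (s:ℂ) * phi lam μ s - (s:ℂ)^2 * phiDeriv lam μ s = (s:ℂ)^3 * e s := by
    rw [hphi, hphiD, hd, he]
    ring
  have hden3 : (phi lam μ s) ^ 3 = (s:ℂ)^3 * (c + (s:ℂ) * d s) ^ 3 := by
    rw [hphi]; ring
  rw [hnum, hden3, mul_div_mul_left _ _ (pow_ne_zero 3 hsne)]
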